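/- Let A be a commutative ring and let φ : A((t)) → A((t)) be an A-algebra endomorphism determined by φ(t) = ψ, where ψ ∈ A((t))* satisfies ν(ψ) ≥ 1 (i.e. ψ = Σ a_l t^l with a_l nilpotent for l < ν, a_ν invertible, ν ≥ 1), so that φ(Σ b_l t^l) = Σ b_l ψ^l (a convergent series). Then for every Laurent series f ∈ A((t)) and every top differential form ω = h dt with h ∈ A((t)), one has res(φ(f)·φ(h)·(∂ψ/∂t) dt) = ν(ψ)·res(f h dt), where res denotes the coefficient of t^{-1}. -/

import Mathlib

open HahnSeries

/-- Termwise derivative of a Laurent series. -/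
noncomputable def lderiv {A : Type*} [CommRing A] (f : LaurentSeries A) : LaurentSeries A where
  coeff := fun l => (l + 1) • f.coeff (l + 1)
  isPWO_support' := by
    have h : (Function.support fun l : ℤ => (l + 1) • f.coeff (l + 1)) ⊆
        (fun l : ℤ => l - 1) '' f.support := by
      intro l hl
      have hc : f.coeff (l + 1) ≠ 0 := by
        intro h0; apply hl; simp [Function.mem_support, h0]
      exact ⟨l + 1, hc, by ring⟩
    refine (f.isPWO_support.image_of_monotoneOn ?_).mono h
    exact fun a _ b _ hab => by omega

namespace ResAux

variable {A : Type*} [CommRing A]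

@[simp] lemma lderiv_coeff (f : LaurentSeries A) (l : ℤ) :
    (lderiv f).coeff l = (l + 1) • f.coeff (l + 1) := rfl

lemma lderiv_add (f g : LaurentSeries A) : lderiv (f + g) = lderiv f + lderiv g := by
  ext l; simp [smul_add]

lemma lderiv_neg (f : LaurentSeries A) : lderiv (-f) = - lderiv f := by
  ext l; simp

lemma lderiv_sub (f g : LaurentSeries A) : lderiv (f - g) = lderiv f - lderiv g := by
  ext l; simp [smul_sub]

lemma lderiv_one : lderiv (1 : LaurentSeries A) = 0 := by
  ext l
  rcases eq_or_ne l (-1) with rfl | hl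
  · simp
  · have : l + 1 ≠ 0 := fun h => hl (by omega)
    simp [coeff_one, this]

lemma res_lderiv (f : LaurentSeries A) : (lderiv f).coeff (-1) = 0 := by
  simp

lemma mem_supp {x : LaurentSeries A} {i : ℤ} (h : i ∈ x.support) : x.coeff i ≠ 0 := h

/-- Key reindexing: residue-style expansion of `lderiv x * y`. -/
lemma lderiv_mul_coeff (x y : LaurentSeries A) (l : ℤ) :
    (lderiv x * y).coeff l =
      ∑ ij ∈ Finset.antidiagonal x.isPWO_support y.isPWO_support (l + 1),
        ij.1 • (x.coeff ij.1 * y.coeff ij.2) := by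
  rw [coeff_mul]
  refine Finset.sum_of_injOn (fun ij => (ij.1 + 1, ij.2)) ?_ ?_ ?_ ?_
  · intro a _ b _ hab
    simp only [Prod.mk.injEq] at hab
    exact Prod.ext (by omega) hab.2
  · intro ij hij
    simp only [Finset.coe_sort_coe, Finset.mem_coe, Finset.mem_addAntidiagonal] at hij ⊢
    obtain ⟨h1, h2, h3⟩ := hij
    refine ⟨?_, h2, by omega⟩
    intro h0
    exact h1 (by simp [h0])
  · intro ij hij hnot
    simp only [Finset.mem_coe, Finset.mem_addAntidiagonal] at hij
    obtain ⟨h1, h2, h3⟩ := hij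
    by_cases hz : (ij.1 • (x.coeff ij.1) : A) = 0
    · rw [← smul_mul_assoc, hz, zero_mul]
    · exfalso
      apply hnot
      refine ⟨(ij.1 - 1, ij.2), ?_, by simp⟩
      simp only [Finset.mem_coe, Finset.mem_addAntidiagonal]
      refine ⟨?_, h2, by omega⟩
      intro h0
      apply hz
      simp only [Function.mem_support, lderiv_coeff] at h0
      have : ij.1 - 1 + 1 = ij.1 := by omega
      rw [this] at h0
      exact h0
  · intro ij hij
    simp only [lderiv_coeff, zsmul_eq_mul]
    push_cast
    ring

lemma mul_lderiv_coeff (x y : LaurentSeries A) (l : ℤ) :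
    (x * lderiv y).coeff l =
      ∑ ij ∈ Finset.antidiagonal x.isPWO_support y.isPWO_support (l + 1),
        ij.2 • (x.coeff ij.1 * y.coeff ij.2) := by
  rw [mul_comm, lderiv_mul_coeff]
  refine Finset.sum_nbij' (fun ij => (ij.2, ij.1)) (fun ij => (ij.2, ij.1)) ?_ ?_ ?_ ?_ ?_
  · intro a ha
    simp only [Finset.mem_addAntidiagonal] at ha ⊢
    exact ⟨ha.2.1, ha.1, by omega⟩
  · intro a ha
    simp only [Finset.mem_addAntidiagonal] at ha ⊢
    exact ⟨ha.2.1, ha.1, by omega⟩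
  · intro a _; rfl
  · intro a _; rfl
  · intro a _; simp [mul_comm]

/-- Leibniz rule for `lderiv`. -/
lemma lderiv_mul (x y : LaurentSeries A) :
    lderiv (x * y) = lderiv x * y + x * lderiv y := by
  ext l
  rw [coeff_add, lderiv_mul_coeff, mul_lderiv_coeff, ← Finset.sum_add_distrib, lderiv_coeff,
    coeff_mul, Finset.smul_sum]
  apply Finset.sum_congr rfl
  intro ij hij
  have h3 : ij.1 + ij.2 = l + 1 := (Finset.mem_addAntidiagonal.mp hij).2.2
  rw [← add_smul, h3]

-- PART 2

lemma coeff_sum {ι : Type*} (s : Finset ι) (F : ι → LaurentSeries A) (l : ℤ) :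
    (∑ i ∈ s, F i).coeff l = ∑ i ∈ s, (F i).coeff l :=
  map_sum (AddMonoidHom.mk' (fun x : LaurentSeries A => x.coeff l) (fun _ _ => rfl)) F s

lemma coeff_mul_eq_zero {x y : LaurentSeries A} {u v c : ℤ} (hx : ∀ i < u, x.coeff i = 0)
    (hy : ∀ j < v, y.coeff j = 0) (hc : c < u + v) : (x * y).coeff c = 0 := by
  rw [coeff_mul]
  apply Finset.sum_eq_zero
  intro ij hij
  rw [Finset.mem_addAntidiagonal] at hij
  obtain ⟨h1, h2, h3⟩ := hij
  exfalso
  rcases lt_or_ge ij.1 u with h | h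
  · exact h1 (hx _ h)
  rcases lt_or_ge ij.2 v with h' | h'
  · exact h2 (hy _ h')
  omega

lemma coeff_pow_eq_zero {x : LaurentSeries A} {u : ℤ} (hu : u ≤ 0)
    (hx : ∀ i < u, x.coeff i = 0) (k : ℕ) : ∀ i < (k : ℤ) * u, (x ^ k).coeff i = 0 := by
  induction k with
  | zero =>
    intro i hi
    simp only [Nat.cast_zero, zero_mul] at hi
    rw [pow_zero]
    rw [coeff_one, if_neg (by omega)]
  | succ n ih =>
    intro i hi
    rw [pow_succ]
    refine coeff_mul_eq_zero ih hx ?_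
    push_cast at hi ⊢
    nlinarith

lemma lderiv_coeff_eq_zero {x : LaurentSeries A} {u : ℤ} (hx : ∀ i < u, x.coeff i = 0) :
    ∀ i < u - 1, (lderiv x).coeff i = 0 := by
  intro i hi
  rw [lderiv_coeff, hx _ (by omega), smul_zero]

/-- Truncation below `N`. -/
noncomputable def htrunc (x : LaurentSeries A) (N : ℤ) : LaurentSeries A where
  coeff l := if l < N then x.coeff l else 0
  isPWO_support' := x.isPWO_support.mono (by
    intro l hl
    simp only [Function.mem_support] at hl ⊢
    intro h0
    apply hl
    split <;> simp [h0])

@[simp] lemma htrunc_coeff (x : LaurentSeries A) (N l : ℤ) :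
    (htrunc x N).coeff l = if l < N then x.coeff l else 0 := rfl

lemma finite_of_isPWO_bddAbove {S : Set ℤ} (h : S.IsPWO) {N : ℤ} (hS : S ⊆ Set.Iio N) :
    S.Finite := by
  rcases S.eq_empty_or_nonempty with rfl | hne
  · exact Set.finite_empty
  · have hwf := h.isWF
    refine Set.Finite.subset (Set.finite_Icc (hwf.min hne) N) ?_
    intro x hx
    exact ⟨hwf.min_le hne hx, le_of_lt (hS hx)⟩

lemma htrunc_support_finite (x : LaurentSeries A) (N : ℤ) :
    (htrunc x N).support.Finite := by
  refine finite_of_isPWO_bddAbove (htrunc x N).isPWO_support (N := N) ?_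
  intro l hl
  rw [HahnSeries.mem_support, htrunc_coeff] at hl
  by_contra h
  simp only [Set.mem_Iio, not_lt] at h
  exact hl (if_neg (by omega))

lemma eq_sum_single {x : LaurentSeries A} (h : x.support.Finite) :
    x = ∑ i ∈ h.toFinset, single i (x.coeff i) := by
  ext l
  rw [coeff_sum]
  by_cases hl : l ∈ h.toFinset
  · rw [Finset.sum_eq_single_of_mem l hl (fun b _ hb => by rw [coeff_single, if_neg (Ne.symm hb)])]
    rw [coeff_single_same]
  · rw [Finset.sum_eq_zero (fun b hb => ?_)]
    · simp only [Set.Finite.mem_toFinset, HahnSeries.mem_support, not_not] at hl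
      exact hl
    · rw [coeff_single, if_neg]
      intro hc; subst hc; exact hl hb

-- PART 3 : lderiv_pow, map lemmas, universal residue lemma
lemma lderiv_pow (x : LaurentSeries A) (k : ℕ) :
    lderiv (x ^ (k + 1)) = (k + 1) • (x ^ k * lderiv x) := by
  induction k with
  | zero => simp [lderiv]
  | succ n ih =>
    rw [pow_succ, lderiv_mul, ih, pow_succ]
    have : ((n + 1) • (x ^ n * lderiv x)) * x = (n+1) • (x ^ n * x * lderiv x) := by
      rw [smul_mul_assoc]; congr 1; ring
    rw [this]
    generalize x ^ n * x * lderiv x = y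
    rw [succ_nsmul, succ_nsmul, add_smul, one_smul]

variable {B : Type*} [CommRing B]

lemma map_coeff' (f : A →+* B) (x : LaurentSeries A) (l : ℤ) :
    (x.map (f : ZeroHom A B)).coeff l = f (x.coeff l) := rfl

lemma map_mul' (f : A →+* B) (x y : LaurentSeries A) :
    (x * y).map (f : ZeroHom A B) = x.map (f : ZeroHom A B) * y.map (f : ZeroHom A B) := by
  have := HahnSeries.map_mul (Γ := ℤ) (f := f.toNonUnitalRingHom) (x := x) (y := y)
  exact this

lemma map_pow' (f : A →+* B) (x : LaurentSeries A) (k : ℕ) :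
    (x ^ k).map (f : ZeroHom A B) = (x.map (f : ZeroHom A B)) ^ k := by
  induction k with
  | zero =>
    ext l
    rw [map_coeff', pow_zero, pow_zero]
    rw [coeff_one, coeff_one]
    split <;> simp
  | succ n ih => rw [pow_succ, pow_succ, map_mul', ih]

lemma map_lderiv (f : A →+* B) (x : LaurentSeries A) :
    (lderiv x).map (f : ZeroHom A B) = lderiv (x.map (f : ZeroHom A B)) := by
  ext l
  rw [map_coeff', lderiv_coeff, lderiv_coeff, map_coeff']
  exact map_zsmul f.toAddMonoidHom _ _

/-- The universal residue vanishing: `res(F^k F') = 0` for finitely supported `F`. -/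
lemma res_pow_lderiv_of_finite (F : LaurentSeries A) (hF : F.support.Finite) (k : ℕ) :
    (F ^ k * lderiv F).coeff (-1) = 0 := by
  classical
  set R := MvPolynomial ℤ ℤ with hR
  set G : LaurentSeries R := ∑ i ∈ hF.toFinset, single i (MvPolynomial.X i) with hG
  set f : R →+* A := MvPolynomial.eval₂Hom (Int.castRingHom A) (fun i => F.coeff i) with hf
  have hmap : G.map (f : ZeroHom R A) = F := by
    ext l
    rw [map_coeff', hG, coeff_sum]
    by_cases hl : l ∈ hF.toFinset
    · rw [Finset.sum_eq_single_of_mem l hl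
        (fun b _ hb => by rw [coeff_single, if_neg (Ne.symm hb)]), coeff_single_same]
      exact MvPolynomial.eval₂Hom_X' _ _ _
    · rw [Finset.sum_eq_zero (fun b hb => by
        rw [coeff_single, if_neg (fun hc => by subst hc; exact hl hb)])]
      simp only [Set.Finite.mem_toFinset, HahnSeries.mem_support, not_not] at hl
      rw [map_zero, hl]
  -- universal vanishing in R
  have huniv : (G ^ k * lderiv G).coeff (-1) = 0 := by
    have h1 : ((k : ℕ) + 1) • ((G ^ k * lderiv G).coeff (-1)) = 0 := by
      have := lderiv_pow G k
      have h2 : (lderiv (G ^ (k + 1))).coeff (-1) = 0 := by simp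
      rw [this] at h2
      rw [coeff_nsmul, Pi.smul_apply] at h2
      exact h2
    have h3 : (((k : ℕ) + 1 : ℕ) : R) * ((G ^ k * lderiv G).coeff (-1)) = 0 := by
      rw [← nsmul_eq_mul]; exact h1
    have h4 : (((k : ℕ) + 1 : ℕ) : R) ≠ 0 :=
      Nat.cast_ne_zero.mpr (Nat.succ_ne_zero k)
    exact (mul_eq_zero.mp h3).resolve_left h4
  calc (F ^ k * lderiv F).coeff (-1)
      = ((G ^ k * lderiv G).map (f : ZeroHom R A)).coeff (-1) := by
        rw [map_mul', map_pow', map_lderiv, hmap]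
    _ = f ((G ^ k * lderiv G).coeff (-1)) := rfl
    _ = 0 := by rw [huniv, map_zero]

-- PART 4 : general res(F^k F') = 0
lemma res_pow_lderiv (F : LaurentSeries A) (k : ℕ) :
    (F ^ k * lderiv F).coeff (-1) = 0 := by
  classical
  rcases eq_or_ne F 0 with rfl | hF0
  · have : lderiv (0 : LaurentSeries A) = 0 := by ext l; simp
    rw [this, mul_zero, coeff_zero]
  · set o : ℤ := min F.order 0 with ho
    have honeg : o ≤ 0 := min_le_right _ _
    have hvan : ∀ i < o, F.coeff i = 0 := fun i hi =>
      coeff_eq_zero_of_lt_order (lt_of_lt_of_le hi (min_le_left _ _))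
    set N : ℤ := 1 - (k : ℤ) * o with hN
    set T : LaurentSeries A := htrunc F N with hT
    have hTvan : ∀ i < o, T.coeff i = 0 := by
      intro i hi
      rw [hT, htrunc_coeff]
      split
      · exact hvan i hi
      · rfl
    have hTfin : T.support.Finite := htrunc_support_finite F N
    set D : LaurentSeries A := F - T with hD
    have hDvan : ∀ i < N, D.coeff i = 0 := by
      intro i hi
      rw [hD, coeff_sub, hT, htrunc_coeff, if_pos hi, sub_self]
    have hresT : (T ^ k * lderiv T).coeff (-1) = 0 := res_pow_lderiv_of_finite T hTfin k
    -- difference vanishes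
    have key : (F ^ k * lderiv F).coeff (-1) - (T ^ k * lderiv T).coeff (-1) = 0 := by
      have hsplit : F ^ k * lderiv F - T ^ k * lderiv T
          = (F ^ k - T ^ k) * lderiv F + T ^ k * (lderiv F - lderiv T) := by ring
      have hgeo : F ^ k - T ^ k = (∑ i ∈ Finset.range k, F ^ i * T ^ (k - 1 - i)) * (F - T) :=
        (geom_sum₂_mul F T k).symm
      -- vanishing of the geometric factor below (k-1)*o
      have hE : ∀ i < ((k : ℤ) - 1) * o,
          (∑ i ∈ Finset.range k, F ^ i * T ^ (k - 1 - i)).coeff i = 0 := by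
        intro i hi
        rw [coeff_sum]
        apply Finset.sum_eq_zero
        intro j hj
        rw [Finset.mem_range] at hj
        refine coeff_mul_eq_zero (coeff_pow_eq_zero honeg hvan j)
          (coeff_pow_eq_zero honeg hTvan (k - 1 - j)) ?_
        have hcast : ((k - 1 - j : ℕ) : ℤ) = (k : ℤ) - 1 - j := by omega
        rw [hcast]
        nlinarith [hi, honeg]
      have h1 : ((F ^ k - T ^ k) * lderiv F).coeff (-1) = 0 := by
        rw [hgeo, mul_assoc]
        refine coeff_mul_eq_zero (v := N + (o - 1)) hE ?_ ?_
        · exact fun j hj => coeff_mul_eq_zero hDvan (lderiv_coeff_eq_zero hvan) hj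
        · have : N = 1 - (k:ℤ) * o := hN
          nlinarith [honeg]
      have h2 : (T ^ k * (lderiv F - lderiv T)).coeff (-1) = 0 := by
        have : lderiv F - lderiv T = lderiv D := by rw [hD, lderiv_sub]
        rw [this]
        refine coeff_mul_eq_zero (coeff_pow_eq_zero honeg hTvan k)
          (lderiv_coeff_eq_zero hDvan) ?_
        omega
      calc (F ^ k * lderiv F).coeff (-1) - (T ^ k * lderiv T).coeff (-1)
          = (F ^ k * lderiv F - T ^ k * lderiv T).coeff (-1) := (coeff_sub ..).symm
        _ = ((F ^ k - T ^ k) * lderiv F).coeff (-1)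
            + (T ^ k * (lderiv F - lderiv T)).coeff (-1) := by rw [hsplit, coeff_add]
        _ = 0 := by rw [h1, h2, add_zero]
    rw [hresT, sub_zero] at key
    exact key

-- PART 5 : residue of dlog
/-- Additivity of `res(dlog)` under products. -/
lemma rlog_add {a b c d : LaurentSeries A} (hac : a * c = 1) (hbd : b * d = 1) :
    (lderiv (a * b) * (d * c)).coeff (-1)
      = (lderiv a * c).coeff (-1) + (lderiv b * d).coeff (-1) := by
  have : lderiv (a * b) * (d * c) = (lderiv a * c) * (b * d) + (lderiv b * d) * (a * c) := by
    rw [lderiv_mul]; ring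
  rw [this, hac, hbd, mul_one, mul_one, coeff_add]

lemma lderiv_single (ν : ℤ) : lderiv (single ν (1 : A)) = single (ν - 1) (ν : A) := by
  ext l
  rw [lderiv_coeff, coeff_single, coeff_single]
  rcases eq_or_ne l (ν - 1) with rfl | hl
  · have h1 : ν - 1 + 1 = ν := by omega
    rw [h1, if_pos rfl, if_pos rfl, zsmul_eq_mul, mul_one]
  · rw [if_neg (fun hc => hl (by omega)), if_neg hl, smul_zero]

lemma ofPowerSeries_vanish (q : PowerSeries A) :
    ∀ l : ℤ, l < 0 → (ofPowerSeries ℤ A q).coeff l = 0 := by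
  intro l hl
  rw [ofPowerSeries_apply]
  apply embDomain_notin_range
  rintro ⟨n, hn⟩
  have : (n : ℤ) = l := hn
  omega

/-- `res(P'/P) = 0` when `P(0)`-part is a unit and the negative coefficients are nilpotent. -/
lemma rlog_eq_zero (P wP : LaurentSeries A) (hPw : P * wP = 1)
    (h0 : IsUnit (P.coeff 0)) (hneg : ∀ k : ℤ, k < 0 → IsNilpotent (P.coeff k)) :
    (lderiv P * wP).coeff (-1) = 0 := by
  classical
  -- power series part
  set q : PowerSeries A := PowerSeries.mk (fun n => P.coeff n) with hq
  set Q : LaurentSeries A := ofPowerSeries ℤ A q with hQdef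
  have hQcoeff : ∀ n : ℕ, Q.coeff (n : ℤ) = P.coeff n := fun n => by
    rw [hQdef, ofPowerSeries_apply_coeff, hq, PowerSeries.coeff_mk]
  have hQvan : ∀ l : ℤ, l < 0 → Q.coeff l = 0 := ofPowerSeries_vanish q
  set η : LaurentSeries A := P - Q with hη
  have hηcoeff : ∀ l : ℤ, 0 ≤ l → η.coeff l = 0 := by
    intro l hl
    obtain ⟨n, rfl⟩ := Int.eq_ofNat_of_zero_le hl
    rw [hη, coeff_sub, hQcoeff, sub_self]
  have hηneg : ∀ l : ℤ, l < 0 → η.coeff l = P.coeff l := by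
    intro l hl
    rw [hη, coeff_sub, hQvan l hl, sub_zero]
  -- η is nilpotent
  have hηfin : η.support.Finite := by
    refine finite_of_isPWO_bddAbove η.isPWO_support (N := 0) ?_
    intro l hl
    rw [HahnSeries.mem_support] at hl
    rcases lt_or_ge l 0 with h | h
    · exact h
    · exact absurd (hηcoeff l h) hl
  have hηnil : IsNilpotent η := by
    rw [eq_sum_single hηfin]
    refine isNilpotent_sum (fun i hi => ?_)
    rcases lt_or_ge i 0 with h | h
    · obtain ⟨K, hK⟩ := hneg i h
      exact ⟨K, by rw [single_pow, ← hηneg i h] at *; rw [hK, single_eq_zero]⟩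
    · rw [hηcoeff i h, single_eq_zero]
      exact IsNilpotent.zero
  -- Q is a unit coming from power series
  have hqu : IsUnit q := by
    rw [PowerSeries.isUnit_iff_constantCoeff]
    have : PowerSeries.constantCoeff q = P.coeff 0 := by
      rw [hq, ← PowerSeries.coeff_zero_eq_constantCoeff_apply, PowerSeries.coeff_mk]
      norm_num
    rw [this]; exact h0
  obtain ⟨qu, hquv⟩ := hqu
  set Qinv : LaurentSeries A := ofPowerSeries ℤ A ((qu⁻¹ : (PowerSeries A)ˣ) : PowerSeries A)
    with hQinv
  have hQQ : Q * Qinv = 1 := by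
    rw [hQdef, hQinv, ← map_mul, ← hquv, Units.mul_inv, map_one]
  have hQinvvan : ∀ l : ℤ, l < 0 → Qinv.coeff l = 0 := ofPowerSeries_vanish _
  -- m and its geometric inverse
  set m : LaurentSeries A := Qinv * η with hm
  have hmnil : IsNilpotent m := by
    rw [hm, mul_comm]
    exact (Commute.all η Qinv).isNilpotent_mul_right hηnil
  obtain ⟨K, hK⟩ := hmnil
  have hPfact : P = Q * (1 + m) := by
    rw [hm, mul_add, mul_one, ← mul_assoc, hQQ, one_mul, hη]
    ring
  set winv : LaurentSeries A := ∑ j ∈ Finset.range K, (-m) ^ j with hwinv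
  have hwm : (1 + m) * winv = 1 := by
    have hg := geom_sum_mul (-m) K
    have : (-m) ^ K = 0 := by
      rw [show (-m) = (-1 : LaurentSeries A) * m from by ring, mul_pow, hK, mul_zero]
    rw [this, zero_sub] at hg
    calc (1 + m) * winv = -(winv * (-m - 1)) := by rw [hwinv]; ring
      _ = -(-1) := by rw [hg]
      _ = 1 := neg_neg 1
  -- inverse uniqueness
  have hwP : wP = winv * Qinv := by
    have h1 : P * (winv * Qinv) = 1 := by
      rw [hPfact]
      calc Q * (1 + m) * (winv * Qinv) = (Q * Qinv) * ((1 + m) * winv) := by ring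
        _ = 1 := by rw [hQQ, hwm, mul_one]
    calc wP = wP * (P * (winv * Qinv)) := by rw [h1, mul_one]
      _ = (P * wP) * (winv * Qinv) := by ring
      _ = winv * Qinv := by rw [hPw, one_mul]
  -- split the residue
  have hsplit : (lderiv P * wP).coeff (-1)
      = (lderiv Q * Qinv).coeff (-1) + (lderiv (1 + m) * winv).coeff (-1) := by
    rw [hPfact, hwP]
    exact rlog_add hQQ hwm
  have hresQ : (lderiv Q * Qinv).coeff (-1) = 0 := by
    refine coeff_mul_eq_zero (u := 0) (v := 0) ?_ hQinvvan (by omega)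
    intro i hi
    rw [lderiv_coeff]
    rcases lt_or_ge (i + 1) 0 with h | h
    · rw [hQvan _ h, smul_zero]
    · have : i + 1 = 0 := by omega
      rw [this, zero_smul]
  have hresM : (lderiv (1 + m) * winv).coeff (-1) = 0 := by
    have h1 : lderiv (1 + m) = lderiv m := by
      rw [lderiv_add, lderiv_one, zero_add]
    rw [h1, hwinv, Finset.mul_sum, coeff_sum]
    refine Finset.sum_eq_zero (fun j _ => ?_)
    have : lderiv m * (-m) ^ j = -((-m) ^ j * lderiv (-m)) := by
      rw [lderiv_neg]; ring
    rw [this, coeff_neg, res_pow_lderiv, neg_zero]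
  rw [hsplit, hresQ, hresM, add_zero]

-- PART 6 : res(psi'/psi) = nu
lemma rlog_eq (ψ w : LaurentSeries A) (hw : ψ * w = 1) (ν : ℤ)
    (hunit : IsUnit (ψ.coeff ν)) (hnil : ∀ l : ℤ, l < ν → IsNilpotent (ψ.coeff l)) :
    (lderiv ψ * w).coeff (-1) = (ν : A) := by
  set σ : LaurentSeries A := single ν 1 with hσdef
  set σ' : LaurentSeries A := single (-ν) 1 with hσ'def
  have hσ : σ * σ' = 1 := by
    rw [hσdef, hσ'def, single_mul_single, mul_one, add_neg_cancel, single_zero_one]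
  set P : LaurentSeries A := σ' * ψ with hPdef
  set wP : LaurentSeries A := σ * w with hwPdef
  have hPw : P * wP = 1 := by
    calc P * wP = (σ * σ') * (ψ * w) := by rw [hPdef, hwPdef]; ring
      _ = 1 := by rw [hσ, hw, mul_one]
  have hψfact : ψ = σ * P := by
    calc ψ = (σ * σ') * ψ := by rw [hσ, one_mul]
      _ = σ * P := by rw [hPdef]; ring
  have hwfact : w = wP * σ' := by
    calc w = (σ * σ') * w := by rw [hσ, one_mul]
      _ = wP * σ' := by rw [hwPdef]; ring
  have hPcoeff : ∀ k : ℤ, P.coeff k = ψ.coeff (k + ν) := by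
    intro k
    have h := coeff_single_mul_add (r := (1 : A)) (x := ψ) (a := k + ν) (b := -ν)
    have h2 : k + ν + -ν = k := by omega
    rw [h2] at h
    rw [hPdef, hσ'def, h, one_mul]
  have hterm1 : (lderiv σ * σ').coeff (-1) = (ν : A) := by
    rw [hσdef, hσ'def, lderiv_single, single_mul_single, mul_one]
    have : ν - 1 + -ν = -1 := by omega
    rw [this, coeff_single_same]
  have hterm2 : (lderiv P * wP).coeff (-1) = 0 := by
    refine rlog_eq_zero P wP hPw ?_ ?_
    · rw [hPcoeff, zero_add]; exact hunit
    · intro k hk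
      rw [hPcoeff]
      exact hnil _ (by omega)
  calc (lderiv ψ * w).coeff (-1)
      = (lderiv (σ * P) * (wP * σ')).coeff (-1) := by rw [← hψfact, ← hwfact]
    _ = (lderiv σ * σ').coeff (-1) + (lderiv P * wP).coeff (-1) := rlog_add hσ hPw
    _ = (ν : A) := by rw [hterm1, hterm2, add_zero]

end ResAux

open ResAux

/-- A map `A((t)) → A((t))` is continuous at `0` for the topology with base of
neighborhoods of zero given by the submodules `tˡA[[t]]`, `l ∈ ℤ`. -/
def IsContMap {A : Type*} [CommRing A] (φ : LaurentSeries A → LaurentSeries A) : Prop :=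
  ∀ d : ℤ, ∃ e : ℤ, ∀ f : LaurentSeries A,
    (∀ i : ℤ, i < e → f.coeff i = 0) → ∀ i : ℤ, i < d → (φ f).coeff i = 0

/-- Let `φ` be the continuous `A`-algebra endomorphism of `A((t))` with `φ(t) = ψ`,
where `ψ ∈ A((t))*` has `ν(ψ) = ν ≥ 1` (the coefficient of `t^ν` is a unit and all lower
coefficients are nilpotent). Then for all `f, h ∈ A((t))`:
`res(φ(f)·φ(h)·(∂ψ/∂t) dt) = ν · res(f·h dt)`. -/
theorem residue_of_substitution {A : Type*} [CommRing A]
    (ψ : LaurentSeries A) (hψ : IsUnit ψ) (ν : ℤ) (hν : 1 ≤ ν)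
    (hunit : IsUnit (ψ.coeff ν)) (hnil : ∀ l : ℤ, l < ν → IsNilpotent (ψ.coeff l))
    (φ : LaurentSeries A →ₐ[A] LaurentSeries A) (hcont : IsContMap ⇑φ)
    (hφt : φ (HahnSeries.single 1 1) = ψ) :
    ∀ f h : LaurentSeries A,
      (φ f * φ h * lderiv ψ).coeff (-1) = ν • ((f * h).coeff (-1)) := by
  classical
  intro f h
  rcases eq_or_ne ψ 0 with rfl | hψ0
  · have h01 : (0 : LaurentSeries A) = 1 := isUnit_zero_iff.mp hψ
    have h01' : (0 : A) = 1 := by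
      have := congrArg (fun x : LaurentSeries A => x.coeff 0) h01
      simpa using this
    haveI : Subsingleton A := subsingleton_of_zero_eq_one h01'
    exact Subsingleton.elim _ _
  rw [← map_mul]
  generalize f * h = g
  set u := hψ.unit with hu
  have huv : (u : LaurentSeries A) = ψ := hψ.unit_spec
  have hw : ψ * (↑u⁻¹ : LaurentSeries A) = 1 := by rw [← huv]; exact u.mul_inv
  -- φ on integer powers of t
  have hnat : ∀ k : ℕ, φ (single (k : ℤ) (1 : A)) = ψ ^ k := by
    intro k
    have hs : (single ((k : ℤ)) (1 : A)) = (single (1 : ℤ) (1 : A)) ^ k := by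
      rw [single_pow, one_pow]
      congr 1
      simp
    rw [hs, map_pow, hφt]
  have hφs : ∀ n : ℤ, φ (single n (1 : A)) = ((u ^ n : (LaurentSeries A)ˣ) : LaurentSeries A) := by
    intro n
    rcases n with k | k
    · rw [show (Int.ofNat k) = ((k : ℕ) : ℤ) from rfl, hnat k, zpow_natCast,
        Units.val_pow_eq_pow_val, huv]
    · have h1 : single (Int.negSucc k) (1 : A) * single (((k + 1 : ℕ)) : ℤ) (1 : A) = 1 := by
        rw [single_mul_single, one_mul]
        have he : Int.negSucc k + ((k + 1 : ℕ) : ℤ) = 0 := by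
          rw [Int.negSucc_eq]; push_cast; ring
        rw [he, single_zero_one]
      have h2 := congrArg φ h1
      rw [map_mul, hnat (k + 1), map_one φ] at h2
      have h3 : ((u ^ (Int.negSucc k) : (LaurentSeries A)ˣ) : LaurentSeries A) * ψ ^ (k + 1)
          = 1 := by
        have h4 : (u ^ (Int.negSucc k)) * (u ^ (((k + 1 : ℕ)) : ℤ)) = 1 := by
          rw [← zpow_add]
          have : Int.negSucc k + ((k + 1 : ℕ) : ℤ) = 0 := by
            rw [Int.negSucc_eq]; push_cast; ring
          rw [this, zpow_zero]
        calc ((u ^ (Int.negSucc k) : (LaurentSeries A)ˣ) : LaurentSeries A) * ψ ^ (k + 1)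
            = ((u ^ (Int.negSucc k) * u ^ (((k + 1 : ℕ)) : ℤ) : (LaurentSeries A)ˣ) :
              LaurentSeries A) := by
              rw [Units.val_mul, zpow_natCast, Units.val_pow_eq_pow_val, huv]
          _ = 1 := by rw [h4, Units.val_one]
      have hcanc : IsUnit (ψ ^ (k + 1)) := hψ.pow _
      exact hcanc.mul_right_cancel (by rw [h2, h3])
  -- residues of powers
  have hpow : ∀ n : ℤ, (((u ^ n : (LaurentSeries A)ˣ) : LaurentSeries A)
      * lderiv ψ).coeff (-1) = if n = -1 then (ν : A) else 0 := by
    intro n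
    rcases n with k | k
    · rw [if_neg (show (Int.ofNat k : ℤ) ≠ -1 by rw [Int.ofNat_eq_natCast]; omega)]
      rw [show (Int.ofNat k : ℤ) = ((k : ℕ) : ℤ) from rfl, zpow_natCast,
        Units.val_pow_eq_pow_val, huv]
      exact res_pow_lderiv ψ k
    · rcases k with _ | j
      · rw [if_pos (show (Int.negSucc 0 : ℤ) = -1 by decide)]
        have hinv : u ^ (Int.negSucc 0) = u⁻¹ := by
          rw [show Int.negSucc 0 = (-1 : ℤ) from rfl, zpow_neg, zpow_one]
        rw [hinv, mul_comm]
        exact rlog_eq ψ _ hw ν hunit hnil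
      · rw [if_neg (show (Int.negSucc (j+1) : ℤ) ≠ -1 by rw [Int.negSucc_eq]; push_cast; omega)]
        set W : LaurentSeries A := (↑u⁻¹ : LaurentSeries A) with hW
        have hWu : ((u ^ (Int.negSucc (j + 1)) : (LaurentSeries A)ˣ) : LaurentSeries A)
            = W ^ (j + 2) := by
          have : Int.negSucc (j + 1) = -(((j + 2 : ℕ)) : ℤ) := by
            rw [Int.negSucc_eq]; push_cast; ring
          rw [this, zpow_neg, zpow_natCast, ← inv_pow, Units.val_pow_eq_pow_val, hW]
        rw [hWu]
        have hψW : ψ * W = 1 := hw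
        have hid : lderiv ψ * W = -(ψ * lderiv W) := by
          have h0 : lderiv (ψ * W) = 0 := by rw [hψW, lderiv_one]
          rw [lderiv_mul] at h0
          exact eq_neg_of_add_eq_zero_left h0
        have hred : W ^ (j + 2) * lderiv ψ = -(W ^ j * lderiv W) := by
          calc W ^ (j + 2) * lderiv ψ = W ^ (j + 1) * (lderiv ψ * W) := by ring
            _ = W ^ (j + 1) * (-(ψ * lderiv W)) := by rw [hid]
            _ = -((W ^ j * (W * ψ)) * lderiv W) := by ring
            _ = -(W ^ j * lderiv W) := by rw [mul_comm W ψ, hψW, mul_one]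
        rw [hred, coeff_neg, res_pow_lderiv, neg_zero]
  -- single monomials
  have hsingle : ∀ (n : ℤ) (c : A),
      (φ (single n c) * lderiv ψ).coeff (-1) = ν • (single n c).coeff (-1) := by
    intro n c
    have h₁ : algebraMap A (LaurentSeries A) c = single (0 : ℤ) c := by
      rw [HahnSeries.algebraMap_apply', PowerSeries.algebraMap_apply]
      simp only [Algebra.algebraMap_self, RingHom.id_apply]
      rw [ofPowerSeries_C]
      rfl
    have hC : φ (single (0 : ℤ) c) = single (0 : ℤ) c := by
      rw [← h₁]; exact φ.commutes c
    have hsm : single n c = single (0 : ℤ) c * single n (1 : A) := by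
      rw [single_mul_single, zero_add, mul_one]
    have hφsc : φ (single n c)
        = single (0 : ℤ) c * ((u ^ n : (LaurentSeries A)ˣ) : LaurentSeries A) := by
      rw [hsm, map_mul, hC, hφs n]
    rw [hφsc, mul_assoc, coeff_single_zero_mul, hpow n, coeff_single]
    rcases eq_or_ne n (-1) with rfl | hn
    · rw [if_pos rfl, if_pos rfl, zsmul_eq_mul]
      ring
    · rw [if_neg hn, if_neg (fun hc => hn hc.symm), mul_zero, smul_zero]
  -- continuity reduction
  set o : ℤ := min ψ.order 0 with ho
  have hLvan : ∀ j : ℤ, j < o - 1 → (lderiv ψ).coeff j = 0 :=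
    lderiv_coeff_eq_zero (fun i hi =>
      coeff_eq_zero_of_lt_order (lt_of_lt_of_le hi (min_le_left _ _)))
  obtain ⟨e, he⟩ := hcont (1 - o)
  set N : ℤ := max e 0 with hN
  set P : LaurentSeries A := htrunc g N with hP
  set T : LaurentSeries A := g - P with hT
  have hTvan : ∀ i : ℤ, i < N → T.coeff i = 0 := fun i hi => by
    rw [hT, coeff_sub, hP, htrunc_coeff, if_pos hi, sub_self]
  have hφT : ∀ i : ℤ, i < 1 - o → (φ T).coeff i = 0 :=
    he T (fun i hi => hTvan i (lt_of_lt_of_le hi (le_max_left _ _)))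
  have hgPT : g = P + T := by rw [hT]; ring
  rw [hgPT, map_add, add_mul, coeff_add, coeff_add, smul_add]
  have hTside : ((φ T) * lderiv ψ).coeff (-1) = 0 :=
    coeff_mul_eq_zero hφT hLvan (by omega)
  have hTres : T.coeff (-1) = 0 := hTvan _ (by omega)
  rw [hTside, hTres, smul_zero, add_zero, add_zero]
  have hPfin : P.support.Finite := htrunc_support_finite g N
  rw [eq_sum_single hPfin, map_sum, Finset.sum_mul, ResAux.coeff_sum, ResAux.coeff_sum, Finset.smul_sum]
  exact Finset.sum_congr rfl (fun i _ => hsingle i (P.coeff i))
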